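/- If R is an n-ary hyperintegral domain and S = R \ {0}, then every nonzero element of S⁻¹R is invertible. -/

import Mathlib

universe u v

/-- Extension of a set-valued `m`-ary hyperoperation to sets of arguments. -/
def setExt {α : Type u} (f : (ℕ → α) → Set α) (A : ℕ → Set α) : Set α :=
  {r | ∃ x : ℕ → α, (∀ i, x i ∈ A i) ∧ r ∈ f x}

/-- A commutative Krasner `(m,n)`-hyperring with scalar identity `one` and
absorbing element `zero`.  The `m`-ary hyperoperation `f` and the `n`-ary
operation `g` are encoded as functions on `ℕ`-indexed families which only
depend on the first `m` (resp. `n`) entries. -/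
structure KrasnerHyperring (R : Type u) (m n : ℕ) where
  f : (ℕ → R) → Set R
  g : (ℕ → R) → R
  zero : R
  one : R
  neg : R → R
  hm : 2 ≤ m
  hn : 2 ≤ n
  f_congr : ∀ x y : ℕ → R, (∀ i, i < m → x i = y i) → f x = f y
  g_congr : ∀ x y : ℕ → R, (∀ i, i < n → x i = y i) → g x = g y
  f_comm : ∀ (x : ℕ → R) (σ : Equiv.Perm ℕ), (∀ i, m ≤ i → σ i = i) → f (x ∘ σ) = f x
  g_comm : ∀ (x : ℕ → R) (σ : Equiv.Perm ℕ), (∀ i, n ≤ i → σ i = i) → g (x ∘ σ) = g x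
  f_nonempty : ∀ x, (f x).Nonempty
  f_assoc : ∀ (z : ℕ → R) (i j : ℕ), i < m → j < m →
    setExt f (fun k => if k < i then {z k} else if k = i then f (fun l => z (i + l)) else {z (k + m - 1)}) =
    setExt f (fun k => if k < j then {z k} else if k = j then f (fun l => z (j + l)) else {z (k + m - 1)})
  g_assoc : ∀ (z : ℕ → R) (i j : ℕ), i < n → j < n →
    g (fun k => if k < i then z k else if k = i then g (fun l => z (i + l)) else z (k + n - 1)) =
    g (fun k => if k < j then z k else if k = j then g (fun l => z (j + l)) else z (k + n - 1))
  distrib : ∀ (x a : ℕ → R),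
    {r | ∃ u ∈ f x, r = g (fun j => if j = 0 then u else a j)} =
    f (fun k => g (fun j => if j = 0 then x k else a j))
  f_zero : ∀ x : R, f (fun i => if i = 0 then x else zero) = {x}
  g_one : ∀ x : R, g (fun i => if i = 0 then x else one) = x
  g_zero : ∀ (x : ℕ → R) (i : ℕ), i < n → x i = zero → g x = zero
  neg_mem : ∀ x : R, zero ∈ f (fun i => if i = 0 then x else if i = 1 then neg x else zero)
  neg_unique : ∀ x y : R, zero ∈ f (fun i => if i = 0 then x else if i = 1 then y else zero) → y = neg x
  canonical : ∀ (a : R) (y : ℕ → R), a ∈ f y → ∀ i, i < m →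
    y i ∈ f (fun j => if j = i then a else neg (y j))

namespace KrasnerHyperring

variable {R : Type u} {m n : ℕ}

/-- `g(a, b, 1^(n-2))`. -/
def g2 (H : KrasnerHyperring R m n) (a b : R) : R :=
  H.g (fun i => if i = 0 then a else if i = 1 then b else H.one)

/-- `S` is an `n`-ary multiplicative subset. -/
def IsMultSubset (H : KrasnerHyperring R m n) (S : Set R) : Prop :=
  ∀ s : ℕ → R, (∀ i, i < n → s i ∈ S) → H.g s ∈ S

/-- The set `f(g(r,s',1^(n-2)), -g(r',s,1^(n-2)), 0^(m-2))`. -/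
def fracMix (H : KrasnerHyperring R m n) (r s' r' s : R) : Set R :=
  H.f (fun i => if i = 0 then H.g2 r s' else if i = 1 then H.neg (H.g2 r' s) else H.zero)

/-- The fraction relation on `R × S`:
`(r,s) ∼ (r',s')` iff `0 ∈ g(t, f(g(r,s',1^(n-2)), -g(r',s,1^(n-2)), 0^(m-2)), 1^(n-2))`
for some `t ∈ S`. -/
def FracRel (H : KrasnerHyperring R m n) (S : Set R) (p q : R × S) : Prop :=
  ∃ t ∈ S, ∃ u ∈ H.fracMix p.1 (q.2 : R) q.1 (p.2 : R), H.g2 t u = H.zero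

/-- The hyperring of fractions `S⁻¹R` as a quotient of `R × S`. -/
def Frac (H : KrasnerHyperring R m n) (S : Set R) : Type u :=
  Quot (H.FracRel S)

/-- The fraction `r/s`. -/
def mkFrac (H : KrasnerHyperring R m n) (S : Set R) (r s : R) (hs : s ∈ S) : Frac H S :=
  Quot.mk _ (r, ⟨s, hs⟩)

/-- The zero fraction `0/1`. -/
def zeroFrac (H : KrasnerHyperring R m n) {S : Set R} (h1 : H.one ∈ S) : Frac H S :=
  H.mkFrac S H.zero H.one h1

/-- The unit fraction `1/1`. -/
def oneFrac (H : KrasnerHyperring R m n) {S : Set R} (h1 : H.one ∈ S) : Frac H S :=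
  H.mkFrac S H.one H.one h1

/-- The natural map `φ : R → S⁻¹R`, `r ↦ r/1`. -/
def natMap (H : KrasnerHyperring R m n) {S : Set R} (h1 : H.one ∈ S) (r : R) : Frac H S :=
  H.mkFrac S r H.one h1

/-- The `n`-ary multiplication on `S⁻¹R`:
`G(r_1/s_1, ..., r_n/s_n) = g(r_1,...,r_n)/g(s_1,...,s_n)`. -/
noncomputable def fracG (H : KrasnerHyperring R m n) {S : Set R} (hS : H.IsMultSubset S)
    (x : ℕ → Frac H S) : Frac H S :=
  H.mkFrac S (H.g (fun i => ((x i).out).1)) (H.g (fun i => (((x i).out).2 : R)))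
    (hS _ (fun i _ => ((x i).out).2.property))

/-- The denominator `g(s_1,...,s_m,1^(n-m))` of the `m`-ary hypersum. -/
noncomputable def denomF (H : KrasnerHyperring R m n) {S : Set R} (x : ℕ → Frac H S) : R :=
  H.g (fun j => if j < m then (((x j).out).2 : R) else H.one)

theorem denomF_mem (H : KrasnerHyperring R m n) {S : Set R} (hS : H.IsMultSubset S)
    (h1 : H.one ∈ S) (x : ℕ → Frac H S) : H.denomF x ∈ S := by
  refine hS _ (fun j _ => ?_)
  by_cases h : j < m <;> simp only [h, if_true, if_false]
  · exact ((x j).out).2.property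
  · exact h1

/-- The `m`-ary hyperaddition on `S⁻¹R`:
`F(r_1/s_1,...,r_m/s_m) = f(g(r_1,s_2,...,s_m,1^(n-m)),...,g(s_1,...,s_{m-1},r_m,1^(n-m))) / g(s_1,...,s_m,1^(n-m))`. -/
noncomputable def fracF (H : KrasnerHyperring R m n) {S : Set R} (hS : H.IsMultSubset S)
    (h1 : H.one ∈ S) (x : ℕ → Frac H S) : Set (Frac H S) :=
  {q | ∃ u ∈ H.f (fun k => H.g (fun j =>
      if j = k then ((x k).out).1 else if j < m then (((x j).out).2 : R) else H.one)),
    q = H.mkFrac S u (H.denomF x) (H.denomF_mem hS h1 x)}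

/-- The negative of a fraction. -/
noncomputable def fracNeg (H : KrasnerHyperring R m n) {S : Set R} (q : Frac H S) : Frac H S :=
  H.mkFrac S (H.neg q.out.1) (q.out.2 : R) q.out.2.property

/-- Hyperideals of a Krasner `(m,n)`-hyperring. -/
def IsHyperideal (H : KrasnerHyperring R m n) (I : Set R) : Prop :=
  H.zero ∈ I ∧ (∀ x : ℕ → R, (∀ i, i < m → x i ∈ I) → H.f x ⊆ I) ∧
    (∀ a ∈ I, H.neg a ∈ I) ∧
    (∀ (x : ℕ → R) (i : ℕ), i < n → x i ∈ I → H.g x ∈ I)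

/-- The localization `S⁻¹I = {a/s : a ∈ I, s ∈ S}` of a hyperideal. -/
def locIdeal (H : KrasnerHyperring R m n) (S I : Set R) : Set (Frac H S) :=
  {q | ∃ a ∈ I, ∃ s, ∃ hs : s ∈ S, q = H.mkFrac S a s hs}

/-- `n`-ary prime hyperideals. -/
def IsPrimeHyperideal (H : KrasnerHyperring R m n) (P : Set R) : Prop :=
  H.IsHyperideal P ∧ P ≠ Set.univ ∧ ∀ x : ℕ → R, H.g x ∈ P → ∃ i, i < n ∧ x i ∈ P

/-- The radical of a hyperideal: the intersection of all `n`-ary prime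
hyperideals containing it (`R` if there are none). -/
def radical (H : KrasnerHyperring R m n) (I : Set R) : Set R :=
  ⋂₀ {P | H.IsPrimeHyperideal P ∧ I ⊆ P}

/-- `n`-ary primary hyperideals. -/
def IsPrimaryHyperideal (H : KrasnerHyperring R m n) (Q : Set R) : Prop :=
  H.IsHyperideal Q ∧ Q ≠ Set.univ ∧
    ∀ x : ℕ → R, H.g x ∈ Q → ∀ i, i < n → x i ∉ Q →
      H.g (Function.update x i H.one) ∈ H.radical Q

/-- `n`-ary hyperintegral domains. -/
def IsHyperDomain (H : KrasnerHyperring R m n) : Prop :=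
  ∀ x : ℕ → R, H.g x = H.zero → ∃ i, i < n ∧ x i = H.zero

/-- Hyperideals of the hyperring of fractions `S⁻¹R`. -/
def IsFracHyperideal (H : KrasnerHyperring R m n) {S : Set R} (hS : H.IsMultSubset S)
    (h1 : H.one ∈ S) (J : Set (Frac H S)) : Prop :=
  H.zeroFrac h1 ∈ J ∧ (∀ x : ℕ → Frac H S, (∀ i, i < m → x i ∈ J) → H.fracF hS h1 x ⊆ J) ∧
    (∀ q ∈ J, H.fracNeg q ∈ J) ∧
    (∀ (x : ℕ → Frac H S) (i : ℕ), i < n → x i ∈ J → H.fracG hS x ∈ J)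

/-- `n`-ary prime hyperideals of `S⁻¹R`. -/
def IsFracPrime (H : KrasnerHyperring R m n) {S : Set R} (hS : H.IsMultSubset S)
    (h1 : H.one ∈ S) (P : Set (Frac H S)) : Prop :=
  H.IsFracHyperideal hS h1 P ∧ P ≠ Set.univ ∧
    ∀ x : ℕ → Frac H S, H.fracG hS x ∈ P → ∃ i, i < n ∧ x i ∈ P

/-- Maximal hyperideals of `S⁻¹R`. -/
def IsFracMaximal (H : KrasnerHyperring R m n) {S : Set R} (hS : H.IsMultSubset S)
    (h1 : H.one ∈ S) (M : Set (Frac H S)) : Prop :=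
  H.IsFracHyperideal hS h1 M ∧ M ≠ Set.univ ∧
    ∀ J : Set (Frac H S), H.IsFracHyperideal hS h1 J → M ⊆ J → J = M ∨ J = Set.univ

/-- The radical of a hyperideal of `S⁻¹R`. -/
def fracRadical (H : KrasnerHyperring R m n) {S : Set R} (hS : H.IsMultSubset S)
    (h1 : H.one ∈ S) (J : Set (Frac H S)) : Set (Frac H S) :=
  ⋂₀ {P | H.IsFracPrime hS h1 P ∧ J ⊆ P}

/-- `n`-ary primary hyperideals of `S⁻¹R`. -/
def IsFracPrimary (H : KrasnerHyperring R m n) {S : Set R} (hS : H.IsMultSubset S)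
    (h1 : H.one ∈ S) (Q : Set (Frac H S)) : Prop :=
  H.IsFracHyperideal hS h1 Q ∧ Q ≠ Set.univ ∧
    ∀ x : ℕ → Frac H S, H.fracG hS x ∈ Q → ∀ i, i < n → x i ∉ Q →
      H.fracG hS (Function.update x i (H.oneFrac h1)) ∈ H.fracRadical hS h1 Q

/-- Homomorphisms of Krasner `(m,n)`-hyperrings. -/
def IsHom {R2 : Type v} (H : KrasnerHyperring R m n) (H2 : KrasnerHyperring R2 m n)
    (k : R → R2) : Prop :=
  (∀ x : ℕ → R, k '' (H.f x) = H2.f (k ∘ x)) ∧ (∀ x : ℕ → R, k (H.g x) = H2.g (k ∘ x))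

/-- Homomorphisms from `S⁻¹R` to a Krasner `(m,n)`-hyperring. -/
def IsFracHom {R2 : Type v} (H : KrasnerHyperring R m n) {S : Set R} (hS : H.IsMultSubset S)
    (h1 : H.one ∈ S) (H2 : KrasnerHyperring R2 m n) (h : Frac H S → R2) : Prop :=
  (∀ x : ℕ → Frac H S, h '' (H.fracF hS h1 x) = H2.f (h ∘ x)) ∧
    (∀ x : ℕ → Frac H S, h (H.fracG hS x) = H2.g (h ∘ x))

/-- The coset `f(r, I, 0^(m-2))` in the quotient `R/I`. -/
def quotCoset (H : KrasnerHyperring R m n) (I : Set R) (r : R) : Set R :=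
  setExt H.f (fun i => if i = 0 then {r} else if i = 1 then I else {H.zero})

end KrasnerHyperring

namespace KrasnerHyperring

variable {R : Type u} {m n : ℕ} (H : KrasnerHyperring R m n)

lemma g2_one' (a : R) : H.g2 a H.one = a := by
  rw [g2, H.g_congr _ (fun i => if i = 0 then a else H.one)
    (by intro i _; by_cases h : i = 0 <;> simp [h]), H.g_one]

lemma g2_comm' (a b : R) : H.g2 a b = H.g2 b a := by
  have hn := H.hn
  have hc := H.g_comm (fun i => if i = 0 then b else if i = 1 then a else H.one)
    (Equiv.swap 0 1) (fun i hi => Equiv.swap_apply_of_ne_of_ne (by omega) (by omega))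
  rw [g2, g2, ← hc]
  apply H.g_congr
  intro i _
  rcases i with _ | _ | i <;> simp [Equiv.swap_apply_def]

lemma g2_one_left' (a : R) : H.g2 H.one a = a := by rw [g2_comm', g2_one']

lemma g2_zero_left' (b : R) : H.g2 H.zero b = H.zero :=
  H.g_zero _ 0 (by have := H.hn; omega) (by simp)

lemma g2_zero_right' (a : R) : H.g2 a H.zero = H.zero :=
  H.g_zero _ 1 (by have := H.hn; omega) (by simp)

lemma neg_neg' (x : R) : H.neg (H.neg x) = x := by
  have h := H.neg_mem x
  have hc := H.f_comm (fun i => if i = 0 then x else if i = 1 then H.neg x else H.zero)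
    (Equiv.swap 0 1) (fun i hi => Equiv.swap_apply_of_ne_of_ne
      (by have := H.hm; omega) (by have := H.hm; omega))
  have he : ((fun i => if i = 0 then x else if i = 1 then H.neg x else H.zero) ∘ (Equiv.swap 0 1))
      = (fun i => if i = 0 then H.neg x else if i = 1 then x else H.zero) := by
    funext i; rcases i with _ | _ | i <;> simp [Equiv.swap_apply_def]
  rw [he] at hc
  exact (H.neg_unique _ _ (hc ▸ h)).symm

lemma neg_inj' {a b : R} (h : H.neg a = H.neg b) : a = b := by
  rw [← H.neg_neg' a, h, H.neg_neg']

lemma neg_g2' (v b : R) : H.g2 (H.neg v) b = H.neg (H.g2 v b) := by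
  have hm := H.hm
  apply H.neg_unique
  have hd := H.distrib (fun i => if i = 0 then v else if i = 1 then H.neg v else H.zero)
    (fun j => if j = 1 then b else H.one)
  have h0 : H.zero ∈ {r | ∃ u ∈ H.f (fun i => if i = 0 then v else if i = 1 then H.neg v else H.zero),
      r = H.g (fun j => if j = 0 then u else if j = 1 then b else H.one)} :=
    ⟨H.zero, H.neg_mem v, (H.g2_zero_left' b).symm⟩
  rw [hd] at h0
  have hfc : H.f (fun k => H.g (fun j => if j = 0 then
        (if k = 0 then v else if k = 1 then H.neg v else H.zero) else if j = 1 then b else H.one))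
      = H.f (fun i => if i = 0 then H.g2 v b else if i = 1 then H.g2 (H.neg v) b else H.zero) := by
    apply H.f_congr
    intro i _
    rcases i with _ | _ | i
    · simp [g2]
    · simp [g2]
    · simpa [g2] using H.g2_zero_left' b
  rwa [hfc] at h0

lemma g2_eq_zero' (hdom : H.IsHyperDomain) (hone : H.one ≠ H.zero) {t u : R}
    (ht : t ≠ H.zero) (h : H.g2 t u = H.zero) : u = H.zero := by
  obtain ⟨i, hi, hz⟩ := hdom _ h
  rcases i with _ | _ | i
  · simp at hz; exact absurd hz ht
  · simpa using hz
  · simp at hz; exact absurd hz hone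

lemma cancel' (hdom : H.IsHyperDomain) (hone : H.one ≠ H.zero) {u v b : R}
    (hb : b ≠ H.zero) (h : H.g2 u b = H.g2 v b) : u = v := by
  have hm := H.hm
  have hmem := H.neg_mem (H.g2 u b)
  have e : H.neg (H.g2 u b) = H.g2 (H.neg v) b := by rw [h, H.neg_g2']
  rw [e] at hmem
  have hd := H.distrib (fun i => if i = 0 then u else if i = 1 then H.neg v else H.zero)
    (fun j => if j = 1 then b else H.one)
  have hfc : H.f (fun k => H.g (fun j => if j = 0 then
        (if k = 0 then u else if k = 1 then H.neg v else H.zero) else if j = 1 then b else H.one))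
      = H.f (fun i => if i = 0 then H.g2 u b else if i = 1 then H.g2 (H.neg v) b else H.zero) := by
    apply H.f_congr
    intro i _
    rcases i with _ | _ | i
    · simp [g2]
    · simp [g2]
    · simpa [g2] using H.g2_zero_left' b
  rw [hfc] at hd
  rw [← hd] at hmem
  obtain ⟨w, hw, hw0⟩ := hmem
  have hg2w : H.g2 w b = H.zero := by rw [g2]; exact hw0.symm
  have hwz : w = H.zero := by
    apply H.g2_eq_zero' hdom hone hb
    rw [H.g2_comm']
    exact hg2w
  rw [hwz] at hw
  have := H.neg_unique u (H.neg v) hw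
  exact H.neg_inj' this.symm

lemma collapse' (u v : R) (c : ℕ → R) :
    H.g (fun k => if k = 0 then u else if k = 1 then v else c k) =
    H.g (fun k => if k = 0 then H.g2 u v else if k = 1 then H.one else c k) := by
  have hn := H.hn
  set z : ℕ → R := fun k => if k = 0 then u else if k = 1 then v
    else if k ≤ n then H.one else c (k - n + 1) with hz
  have ha := H.g_assoc z 1 0 (by omega) (by omega)
  calc H.g (fun k => if k = 0 then u else if k = 1 then v else c k)
      = H.g (fun k => if k < 1 then z k else if k = 1 then H.g (fun l => z (1 + l))
          else z (k + n - 1)) := by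
        apply H.g_congr
        intro i hi
        have hin : H.g (fun l => z (1 + l)) = v := by
          rw [H.g_congr _ (fun l => if l = 0 then v else H.one) ?_, H.g_one]
          intro l hl
          rcases l with _ | l
          · simp [hz]
          · simp only [hz]
            rw [if_neg (by omega), if_neg (by omega), if_pos (by omega), if_neg (by omega)]
        rcases i with _ | _ | i
        · rw [if_pos rfl, if_pos (by omega)]; simp [hz]
        · rw [if_neg (by omega), if_pos rfl, if_neg (by omega), if_pos rfl]
          exact hin.symm
        · rw [if_neg (by omega), if_neg (by omega), if_neg (by omega), if_neg (by omega)]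
          simp only [hz]
          rw [if_neg (by omega), if_neg (by omega), if_neg (by omega)]
          congr 1
          omega
    _ = H.g (fun k => if k < 0 then z k else if k = 0 then H.g (fun l => z (0 + l))
          else z (k + n - 1)) := ha
    _ = H.g (fun k => if k = 0 then H.g2 u v else if k = 1 then H.one else c k) := by
        apply H.g_congr
        intro i hi
        have hin : H.g (fun l => z (0 + l)) = H.g2 u v := by
          rw [g2]
          apply H.g_congr
          intro l hl
          rcases l with _ | _ | l
          · simp [hz]
          · simp [hz]
          · simp only [Nat.zero_add, hz]
            rw [if_neg (by omega), if_neg (by omega), if_pos (by omega), if_neg (by omega),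
              if_neg (by omega)]
        rcases i with _ | _ | i
        · rw [if_neg (by omega), if_pos rfl, if_pos rfl]; exact hin
        · rw [if_neg (by omega), if_neg (by omega), if_neg (by omega), if_pos rfl]
          simp only [hz]
          rw [if_neg (by omega), if_neg (by omega), if_pos (by omega)]
        · rw [if_neg (by omega), if_neg (by omega), if_neg (by omega), if_neg (by omega)]
          simp only [hz]
          rw [if_neg (by omega), if_neg (by omega), if_neg (by omega)]
          congr 1
          omega

lemma g2_assoc' (a b cc : R) : H.g2 (H.g2 a b) cc = H.g2 a (H.g2 b cc) := by
  have hn := H.hn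
  set z : ℕ → R := fun k => if k = 0 then a else if k = 1 then b
    else if k = n then cc else H.one with hz
  have ha := H.g_assoc z 0 1 (by omega) (by omega)
  calc H.g2 (H.g2 a b) cc
      = H.g (fun k => if k < 0 then z k else if k = 0 then H.g (fun l => z (0 + l))
          else z (k + n - 1)) := by
        rw [g2]
        apply H.g_congr
        intro i hi
        have hin : H.g (fun l => z (0 + l)) = H.g2 a b := by
          rw [g2]
          apply H.g_congr
          intro l hl
          rcases l with _ | _ | l
          · simp [hz]
          · simp [hz]
          · simp only [Nat.zero_add, hz]
            rw [if_neg (by omega), if_neg (by omega), if_neg (by omega), if_neg (by omega),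
              if_neg (by omega)]
        rcases i with _ | _ | i
        · rw [if_pos rfl, if_neg (by omega), if_pos rfl]; exact hin.symm
        · rw [if_neg (by omega), if_pos rfl, if_neg (by omega), if_neg (by omega)]
          simp only [hz]
          rw [if_neg (by omega), if_neg (by omega), if_pos (by omega)]
        · rw [if_neg (by omega), if_neg (by omega), if_neg (by omega), if_neg (by omega)]
          simp only [hz]
          rw [if_neg (by omega), if_neg (by omega), if_neg (by omega)]
    _ = H.g (fun k => if k < 1 then z k else if k = 1 then H.g (fun l => z (1 + l))
          else z (k + n - 1)) := ha
    _ = H.g2 a (H.g2 b cc) := by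
        rw [g2]
        apply H.g_congr
        intro i hi
        have hswap := H.g_comm (fun l => z (1 + l)) (Equiv.swap 1 (n - 1))
          (fun i hi => Equiv.swap_apply_of_ne_of_ne (by omega) (by omega))
        have hin : H.g (fun l => z (1 + l)) = H.g2 b cc := by
          rw [← hswap, g2]
          apply H.g_congr
          intro l hl
          rcases l with _ | _ | l
          · have h0 : Equiv.swap 1 (n - 1) 0 = 0 :=
              Equiv.swap_apply_of_ne_of_ne (by omega) (by omega)
            simp only [Function.comp, h0]
            simp [hz]
          · have h1 : Equiv.swap 1 (n - 1) 1 = n - 1 := Equiv.swap_apply_left 1 (n - 1)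
            have h1n : 1 + (n - 1) = n := by omega
            simp only [Function.comp, h1, h1n, hz]
            simp only [if_neg (by omega : ¬ n = 0), if_neg (by omega : ¬ n = 1)]
            simp
          · by_cases hl2 : l + 2 = n - 1
            · have hsw : Equiv.swap 1 (n - 1) (l + 1 + 1) = 1 := by
                rw [show l + 1 + 1 = l + 2 from rfl, hl2]
                exact Equiv.swap_apply_right 1 (n - 1)
              have hn3 : 3 ≤ n := by omega
              simp only [Function.comp, hsw, hz]
              rw [if_neg (by omega), if_neg (by omega), if_neg (by omega), if_neg (by omega),
                if_neg (by omega)]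
            · have hsw : Equiv.swap 1 (n - 1) (l + 1 + 1) = l + 1 + 1 :=
                Equiv.swap_apply_of_ne_of_ne (by omega) (by omega)
              simp only [Function.comp, hsw, hz]
              rw [if_neg (by omega), if_neg (by omega), if_neg (by omega), if_neg (by omega),
                if_neg (by omega)]
        rcases i with _ | _ | i
        · rw [if_pos (by omega), if_pos rfl]; simp [hz]
        · rw [if_neg (by omega), if_pos rfl, if_neg (by omega), if_pos rfl]
          exact hin
        · rw [if_neg (by omega), if_neg (by omega), if_neg (by omega), if_neg (by omega)]
          simp only [hz]
          rw [if_neg (by omega), if_neg (by omega), if_neg (by omega)]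

section Frac

lemma rel_to_cross (hdom : H.IsHyperDomain) (hone : H.one ≠ H.zero) {S : Set R} (hSsub : S ⊆ {x : R | x ≠ H.zero})
    {p q : R × S} (h : H.FracRel S p q) : H.g2 p.1 (q.2 : R) = H.g2 q.1 (p.2 : R) := by
  obtain ⟨t, ht, u, hu, htu⟩ := h
  have hu0 : u = H.zero := H.g2_eq_zero' hdom hone (hSsub ht) htu
  rw [hu0] at hu
  have := H.neg_unique _ _ hu
  exact (H.neg_inj' this).symm

lemma cross_to_rel {S : Set R} (h1 : H.one ∈ S) {p q : R × S}
    (h : H.g2 p.1 (q.2 : R) = H.g2 q.1 (p.2 : R)) : H.FracRel S p q := by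
  refine ⟨H.one, h1, H.zero, ?_, H.g2_zero_right' _⟩
  unfold fracMix
  rw [h]
  exact H.neg_mem _

lemma eqvgen_cross (hdom : H.IsHyperDomain) (hone : H.one ≠ H.zero) {S : Set R} (hSsub : S ⊆ {x : R | x ≠ H.zero})
    {p q : R × S} (h : Relation.EqvGen (H.FracRel S) p q) :
    H.g2 p.1 (q.2 : R) = H.g2 q.1 (p.2 : R) := by
  induction h with
  | rel a b hab => exact H.rel_to_cross hdom hone hSsub hab
  | refl a => rfl
  | symm a b _ ih => exact ih.symm
  | trans a b c _ _ ih1 ih2 =>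
      have hb2 : (b.2 : R) ≠ H.zero := hSsub b.2.property
      apply H.cancel' hdom hone hb2
      calc H.g2 (H.g2 a.1 (c.2 : R)) (b.2 : R)
          = H.g2 a.1 (H.g2 (c.2 : R) (b.2 : R)) := H.g2_assoc' _ _ _
        _ = H.g2 a.1 (H.g2 (b.2 : R) (c.2 : R)) := by rw [H.g2_comm' (c.2 : R)]
        _ = H.g2 (H.g2 a.1 (b.2 : R)) (c.2 : R) := (H.g2_assoc' _ _ _).symm
        _ = H.g2 (H.g2 b.1 (a.2 : R)) (c.2 : R) := by rw [ih1]
        _ = H.g2 b.1 (H.g2 (a.2 : R) (c.2 : R)) := H.g2_assoc' _ _ _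
        _ = H.g2 b.1 (H.g2 (c.2 : R) (a.2 : R)) := by rw [H.g2_comm' (a.2 : R)]
        _ = H.g2 (H.g2 b.1 (c.2 : R)) (a.2 : R) := (H.g2_assoc' _ _ _).symm
        _ = H.g2 (H.g2 c.1 (b.2 : R)) (a.2 : R) := by rw [ih2]
        _ = H.g2 c.1 (H.g2 (b.2 : R) (a.2 : R)) := H.g2_assoc' _ _ _
        _ = H.g2 c.1 (H.g2 (a.2 : R) (b.2 : R)) := by rw [H.g2_comm' (b.2 : R)]
        _ = H.g2 (H.g2 c.1 (a.2 : R)) (b.2 : R) := (H.g2_assoc' _ _ _).symm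

end Frac

end KrasnerHyperring
/-- if `R` is an `n`-ary hyperintegral domain and `S = R \ {0}`,
then every nonzero element of `S⁻¹R` is invertible. -/
theorem frac_field {R : Type u} {m n : ℕ} (H : KrasnerHyperring R m n)
    (hdom : H.IsHyperDomain)
    (hS : H.IsMultSubset {x : R | x ≠ H.zero}) (h1 : H.one ∈ {x : R | x ≠ H.zero}) :
    ∀ q : KrasnerHyperring.Frac H {x : R | x ≠ H.zero}, q ≠ H.zeroFrac h1 →
      ∃ y : KrasnerHyperring.Frac H {x : R | x ≠ H.zero},
        H.fracG hS (fun i => if i = 0 then q else if i = 1 then y else H.oneFrac h1) =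
          H.oneFrac h1 := by
  intro q hq
  have hone : H.one ≠ H.zero := h1
  have hSsub : {x : R | x ≠ H.zero} ⊆ {x : R | x ≠ H.zero} := fun x hx => hx
  have hqeq : Quot.mk (H.FracRel {x : R | x ≠ H.zero}) q.out = q := Quot.out_eq q
  have hr : q.out.1 ≠ H.zero := by
    intro h0
    apply hq
    rw [← hqeq]
    refine Quot.sound (H.cross_to_rel (q := (H.zero, ⟨H.one, h1⟩)) h1 ?_)
    show H.g2 q.out.1 H.one = H.g2 H.zero (q.out.2 : R)
    rw [H.g2_one', h0, H.g2_zero_left']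
  set y : KrasnerHyperring.Frac H {x : R | x ≠ H.zero} :=
    H.mkFrac {x : R | x ≠ H.zero} (q.out.2 : R) q.out.1 hr with hy
  refine ⟨y, ?_⟩
  have ha : H.g2 y.out.1 q.out.1 = H.g2 (q.out.2 : R) (y.out.2 : R) := by
    have hmk : Quot.mk (H.FracRel {x : R | x ≠ H.zero}) y.out
        = Quot.mk (H.FracRel {x : R | x ≠ H.zero}) ((q.out.2 : R), ⟨q.out.1, hr⟩) :=
      Quot.out_eq y
    exact H.eqvgen_cross hdom hone hSsub (Quot.eq.mp hmk)
  have hcd : (H.oneFrac h1).out.1 = ((H.oneFrac h1).out.2 : R) := by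
    have hmk : Quot.mk (H.FracRel {x : R | x ≠ H.zero}) (H.oneFrac h1).out
        = Quot.mk (H.FracRel {x : R | x ≠ H.zero}) (H.one, ⟨H.one, h1⟩) :=
      Quot.out_eq (H.oneFrac h1)
    have := H.eqvgen_cross hdom hone hSsub (Quot.eq.mp hmk)
    rwa [H.g2_one', H.g2_one_left'] at this
  have key : H.g (fun i =>
        (((fun i => if i = 0 then q else if i = 1 then y else H.oneFrac h1) i).out).1)
      = H.g (fun i =>
        ((((fun i => if i = 0 then q else if i = 1 then y else H.oneFrac h1) i).out).2 : R)) := by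
    have hn := H.hn
    calc H.g (fun i =>
          (((fun i => if i = 0 then q else if i = 1 then y else H.oneFrac h1) i).out).1)
        = H.g (fun k => if k = 0 then q.out.1 else if k = 1 then y.out.1
            else (H.oneFrac h1).out.1) := by
          apply H.g_congr
          intro i _
          rcases i with _ | _ | i <;> simp
      _ = H.g (fun k => if k = 0 then H.g2 q.out.1 y.out.1 else if k = 1 then H.one
            else (H.oneFrac h1).out.1) := H.collapse' _ _ _
      _ = H.g (fun k => if k = 0 then H.g2 (q.out.2 : R) (y.out.2 : R) else if k = 1 then H.one
            else (H.oneFrac h1).out.1) := by rw [H.g2_comm' q.out.1, ha]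
      _ = H.g (fun k => if k = 0 then (q.out.2 : R) else if k = 1 then (y.out.2 : R)
            else (H.oneFrac h1).out.1) := (H.collapse' _ _ _).symm
      _ = H.g (fun i =>
          ((((fun i => if i = 0 then q else if i = 1 then y else H.oneFrac h1) i).out).2 : R)) := by
          apply H.g_congr
          intro i _
          rcases i with _ | _ | i <;> simp [hcd]
  refine Quot.sound (H.cross_to_rel (q := (H.one, ⟨H.one, h1⟩)) h1 ?_)
  show H.g2 (H.g (fun i =>
      (((fun i => if i = 0 then q else if i = 1 then y else H.oneFrac h1) i).out).1)) H.one
    = H.g2 H.one (H.g (fun i =>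
      ((((fun i => if i = 0 then q else if i = 1 then y else H.oneFrac h1) i).out).2 : R)))
  rw [H.g2_one', H.g2_one_left', key]
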